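/- Let N ≥ 1, 0 < h_m < h_M, c ∈ ℝ, and A ∈ ℝ^{N×N} be a Hurwitz matrix with simple eigenvalues μ_1, …, μ_N satisfying Re μ_n < −3|c| for all n. Then there exist σ, C₀, C₁ > 0 such that for every continuous initial condition x₀ : [−h_M, 0] → ℝ^N, every continuous delay h : [0,∞) → [h_m, h_M], and every continuous forcing q : [0,∞) → ℝ^N, the solution x of ẋ(t) = A x(t) + c(x(t−h(t)) − x(t)) + q(t), x|_{[−h_M,0]} = x₀, satisfies ‖x(t)‖ ≤ C₀ e^{−σ t} sup_{τ∈[−h_M,0]} ‖x₀(τ)‖ + C₁ sup_{τ∈[0,t]} e^{−σ(t−τ)} ‖q(τ)‖ for all t ≥ 0. -/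

import Mathlib

open Real Set Polynomial
open scoped Matrix

noncomputable def Complex.abs : AbsoluteValue ℂ ℝ :=
  IsAbsoluteValue.toAbsoluteValue (norm : ℂ → ℝ)

lemma Complex.norm_eq_abs (z : ℂ) : ‖z‖ = Complex.abs z := rfl

lemma Complex.abs_exp (z : ℂ) : Complex.abs (Complex.exp z) = Real.exp z.re :=
  Complex.norm_exp z

lemma Complex.abs_ofReal (r : ℝ) : Complex.abs (r : ℂ) = |r| :=
  (Complex.norm_real r).trans (Real.norm_eq_abs r)

lemma Complex.continuous_abs : Continuous (fun z : ℂ => Complex.abs z) := continuous_norm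

lemma Complex.abs_re_le_abs (z : ℂ) : |z.re| ≤ Complex.abs z := Complex.abs_re_le_norm z

lemma integral_exp_le' (β τ : ℝ) (hβ : 0 < β) :
    ∫ s in (0:ℝ)..τ, Real.exp (-β * (τ - s)) ≤ 1 / β := by
  have hder : ∀ s ∈ uIcc (0:ℝ) τ,
      HasDerivAt (fun s => Real.exp (-β * (τ - s)) / β) (Real.exp (-β * (τ - s))) s := by
    intro s _
    have h1 : HasDerivAt (fun s : ℝ => -β * (τ - s)) β s := by
      simpa using ((hasDerivAt_id s).const_sub τ).const_mul (-β)
    have h2 := (h1.exp).div_const β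
    simpa [mul_div_assoc, mul_div_cancel_right₀ _ hβ.ne'] using h2
  have hint : IntervalIntegrable (fun s => Real.exp (-β * (τ - s)))
      MeasureTheory.volume 0 τ := (Continuous.intervalIntegrable (by fun_prop) _ _)
  rw [intervalIntegral.integral_eq_sub_of_hasDerivAt hder hint]
  have h3 : Real.exp (-β * (τ - τ)) = 1 := by simp
  have h4 : 0 < Real.exp (-β * (τ - 0)) := Real.exp_pos _
  rw [h3, div_sub_div_same, div_le_div_iff₀ hβ hβ]
  nlinarith

lemma scalar_halanay (h_M α σ cc : ℝ) (hM0 : 0 < h_M)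
    (hα : 0 < α) (hσ : 0 < σ) (hσα : σ < α)
    (hθ : |cc| * Real.exp (σ * h_M) < α - σ)
    (ν : ℂ) (hν : ν.re ≤ -α)
    (h : ℝ → ℝ) (hh : Continuous h) (hhr : ∀ s, 0 ≤ s → 0 ≤ h s ∧ h s ≤ h_M)
    (r : ℝ → ℂ) (hr : Continuous r)
    (y : ℝ → ℂ) (hy : Continuous y)
    (hode : ∀ s, 0 ≤ s → HasDerivAt y (ν * y s + (cc:ℂ) * y (s - h s) + r s) s)
    (M₀ R T : ℝ) (hT : 0 ≤ T)
    (hM₀ : ∀ s ∈ Icc (-h_M) (0:ℝ), Complex.abs (y s) ≤ M₀)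
    (hR : ∀ s ∈ Icc (0:ℝ) T, Real.exp (-σ * (T - s)) * Complex.abs (r s) ≤ R) :
    Complex.abs (y T) ≤
      ((α - σ) * Real.exp (-σ * T) * M₀ + R) / (α - σ - |cc| * Real.exp (σ * h_M)) := by
  set β := α - σ with hβdef
  set γ := |cc| * Real.exp (σ * h_M) with hγdef
  have hβ : 0 < β := by simp only [hβdef]; linarith
  have hγ0 : 0 ≤ γ := by positivity
  have hβγ : γ < β := hθ
  have hM₀0 : 0 ≤ M₀ := le_trans (Complex.abs.nonneg _)
    (hM₀ 0 ⟨by linarith, le_rfl⟩)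
  have hR0 : 0 ≤ R := le_trans (mul_nonneg (Real.exp_pos _).le (Complex.abs.nonneg _)) (hR 0 ⟨le_rfl, hT⟩)
  set g : ℝ → ℂ := fun s => (cc:ℂ) * y (s - h s) + r s with hgdef
  have hgc : Continuous g := (continuous_const.mul (hy.comp (continuous_id.sub hh))).add hr
  set u : ℝ → ℝ := fun s => Real.exp (σ * s) * Complex.abs (y s) with hudef
  have huc : Continuous u := by
    apply Continuous.mul
    · fun_prop
    · exact Complex.continuous_abs.comp hy
  obtain ⟨s₀, hs₀mem, hs₀max⟩ := isCompact_Icc.exists_isMaxOn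
    (Set.nonempty_Icc.mpr (by linarith : -h_M ≤ T)) huc.continuousOn
  set U := u s₀ with hUdef
  have hU0 : 0 ≤ U := mul_nonneg (Real.exp_pos _).le (Complex.abs.nonneg _)
  have hUb : ∀ s ∈ Icc (-h_M) T, u s ≤ U := fun s hs => hs₀max hs
  -- variation of constants
  have rep : ∀ τ ∈ Icc (0:ℝ) T, y τ = Complex.exp (ν * τ) * y 0
      + ∫ s in (0:ℝ)..τ, Complex.exp (ν * ((τ : ℂ) - s)) * g s := by
    intro τ hτ
    have hdiff : ∀ s ∈ uIcc (0:ℝ) τ, HasDerivAt (fun s : ℝ => Complex.exp (-(ν * s)) * y s)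
        (Complex.exp (-(ν * (s : ℂ))) * g s) s := by
      intro s hs
      rw [uIcc_of_le hτ.1] at hs
      have d1 : HasDerivAt (fun s : ℝ => -(ν * (s : ℂ))) (-ν) s := by
        simpa [Pi.neg_def] using (((hasDerivAt_id s).ofReal_comp).const_mul ν).neg
      have d2 := d1.cexp
      have d3 := d2.fun_mul (hode s hs.1)
      refine d3.congr_deriv ?_
      show _ = Complex.exp (-(ν * (s : ℂ))) * ((cc:ℂ) * y (s - h s) + r s)
      ring
    have hint : IntervalIntegrable (fun s : ℝ => Complex.exp (-(ν * (s : ℂ))) * g s)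
        MeasureTheory.volume 0 τ := by
      apply Continuous.intervalIntegrable
      apply Continuous.mul _ hgc
      apply Continuous.cexp
      fun_prop
    have hftc := intervalIntegral.integral_eq_sub_of_hasDerivAt hdiff hint
    have hone : Complex.exp (ν * (τ : ℂ)) * Complex.exp (-(ν * (τ : ℂ))) = 1 := by
      rw [← Complex.exp_add]; simp
    have e1 : EqOn (fun s : ℝ => Complex.exp (ν * ((τ : ℂ) - s)) * g s)
        (fun s : ℝ => Complex.exp (ν * (τ : ℂ)) * (Complex.exp (-(ν * (s : ℂ))) * g s))
        (uIcc 0 τ) := by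
      intro s _
      simp only
      rw [← mul_assoc, ← Complex.exp_add]
      ring_nf
    rw [intervalIntegral.integral_congr e1, intervalIntegral.integral_const_mul, hftc]
    simp only [Complex.ofReal_zero, mul_zero, neg_zero, Complex.exp_zero, one_mul]
    linear_combination (-(y τ)) * hone
  -- main pointwise estimate
  have est : ∀ τ ∈ Icc (0:ℝ) T, u τ ≤ M₀ + (γ * U + Real.exp (σ * T) * R) / β := by
    intro τ hτ
    obtain ⟨hτ0, hτT⟩ := hτ
    set Cst : ℝ := (γ * U + Real.exp (σ * T) * R) with hCst
    have hCst0 : 0 ≤ Cst := by positivity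
    have habs : Complex.abs (y τ) ≤ Real.exp (-α * τ) * M₀
        + Cst * Real.exp (-σ * τ) / β := by
      rw [rep τ ⟨hτ0, hτT⟩]
      refine le_trans (Complex.abs.add_le _ _) (add_le_add ?_ ?_)
      · rw [map_mul, Complex.abs_exp]
        have : (ν * (τ : ℂ)).re = ν.re * τ := by simp [Complex.mul_re]
        rw [this]
        have h1 : Real.exp (ν.re * τ) ≤ Real.exp (-α * τ) :=
          Real.exp_le_exp.mpr (mul_le_mul_of_nonneg_right hν hτ0)
        exact mul_le_mul h1 (hM₀ 0 ⟨by linarith, le_rfl⟩) (Complex.abs.nonneg _)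
          (Real.exp_pos _).le
      · have hnorm := intervalIntegral.norm_integral_le_integral_norm
          (f := fun s : ℝ => Complex.exp (ν * ((τ : ℂ) - s)) * g s)
          (μ := MeasureTheory.volume) (a := 0) (b := τ) hτ0
        rw [Complex.norm_eq_abs] at hnorm
        refine le_trans hnorm ?_
        have hpt : ∀ s ∈ Icc (0:ℝ) τ,
            ‖Complex.exp (ν * ((τ : ℂ) - s)) * g s‖ ≤
              Cst * Real.exp (-σ * τ) * Real.exp (-β * (τ - s)) := by
          intro s hs
          rw [norm_mul, Complex.norm_eq_abs, Complex.norm_eq_abs, Complex.abs_exp]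
          have hre : (ν * ((τ : ℂ) - s)).re = ν.re * (τ - s) := by
            simp [Complex.mul_re, Complex.sub_re, Complex.sub_im]
          rw [hre]
          have h1 : Real.exp (ν.re * (τ - s)) ≤ Real.exp (-α * (τ - s)) :=
            Real.exp_le_exp.mpr (mul_le_mul_of_nonneg_right hν (by linarith [hs.2]))
          have h2 : Complex.abs (g s) ≤ |cc| * Complex.abs (y (s - h s)) + Complex.abs (r s) := by
            refine le_trans (Complex.abs.add_le _ _) ?_
            rw [map_mul, Complex.abs_ofReal]
          have hhs := hhr s hs.1
          have hmem : s - h s ∈ Icc (-h_M) T :=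
            ⟨by linarith [hhs.2, hs.1], by linarith [hhs.1, hs.2]⟩
          have hU1 : Real.exp (σ * (s - h s)) * Complex.abs (y (s - h s)) ≤ U := hUb _ hmem
          have h3 : Complex.abs (y (s - h s)) ≤ Real.exp (σ * h_M) * Real.exp (-σ * s) * U := by
            calc Complex.abs (y (s - h s))
                = Real.exp (-(σ * (s - h s))) *
                  (Real.exp (σ * (s - h s)) * Complex.abs (y (s - h s))) := by
                  rw [← mul_assoc, ← Real.exp_add]; simp
              _ ≤ Real.exp (-(σ * (s - h s))) * U :=
                  mul_le_mul_of_nonneg_left hU1 (Real.exp_pos _).le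
              _ ≤ Real.exp (σ * h_M) * Real.exp (-σ * s) * U := by
                  refine mul_le_mul_of_nonneg_right ?_ hU0
                  rw [← Real.exp_add]
                  exact Real.exp_le_exp.mpr (by nlinarith [hhs.2, hσ.le])
          have h4 : Complex.abs (r s) ≤ Real.exp (σ * (T - s)) * R := by
            have hrs := hR s ⟨hs.1, le_trans hs.2 hτT⟩
            have hee : Real.exp (σ * (T - s)) * Real.exp (-σ * (T - s)) = 1 := by
              rw [← Real.exp_add]
              rw [show σ * (T - s) + -σ * (T - s) = 0 by ring, Real.exp_zero]
            calc Complex.abs (r s)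
                = (Real.exp (σ * (T - s)) * Real.exp (-σ * (T - s))) * Complex.abs (r s) := by
                  rw [hee, one_mul]
              _ = Real.exp (σ * (T - s)) * (Real.exp (-σ * (T - s)) * Complex.abs (r s)) := by
                  ring
              _ ≤ Real.exp (σ * (T - s)) * R :=
                  mul_le_mul_of_nonneg_left hrs (Real.exp_pos _).le
          have key : Real.exp (-α * (τ - s)) *
              ((|cc| * (Real.exp (σ * h_M) * Real.exp (-σ * s) * U)) + Real.exp (σ * (T - s)) * R)
              = Cst * Real.exp (-σ * τ) * Real.exp (-β * (τ - s)) := by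
            have id1 : Real.exp (-α * (τ - s)) * Real.exp (-σ * s)
                = Real.exp (-σ * τ) * Real.exp (-β * (τ - s)) := by
              rw [← Real.exp_add, ← Real.exp_add]
              congr 1
              simp only [hβdef]; ring
            have id2 : Real.exp (-α * (τ - s)) * Real.exp (σ * (T - s))
                = Real.exp (σ * T) * (Real.exp (-σ * τ) * Real.exp (-β * (τ - s))) := by
              rw [← Real.exp_add, ← Real.exp_add, ← Real.exp_add]
              congr 1
              simp only [hβdef]; ring
            simp only [hCst, hγdef]
            linear_combination (|cc| * Real.exp (σ * h_M) * U) * id1 + R * id2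
          calc Real.exp (ν.re * (τ - s)) * Complex.abs (g s)
              ≤ Real.exp (-α * (τ - s)) *
                ((|cc| * (Real.exp (σ * h_M) * Real.exp (-σ * s) * U)) + Real.exp (σ * (T - s)) * R) := by
                refine mul_le_mul h1 ?_ (Complex.abs.nonneg _) (Real.exp_pos _).le
                refine le_trans h2 (add_le_add ?_ h4)
                exact mul_le_mul_of_nonneg_left h3 (abs_nonneg _)
            _ = Cst * Real.exp (-σ * τ) * Real.exp (-β * (τ - s)) := key
        have hint1 : IntervalIntegrable (fun s : ℝ => ‖Complex.exp (ν * ((τ : ℂ) - s)) * g s‖)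
            MeasureTheory.volume 0 τ := by
          apply Continuous.intervalIntegrable
          apply Continuous.norm
          apply Continuous.mul _ hgc
          apply Continuous.cexp
          fun_prop
        have hint2 : IntervalIntegrable
            (fun s : ℝ => Cst * Real.exp (-σ * τ) * Real.exp (-β * (τ - s)))
            MeasureTheory.volume 0 τ := (Continuous.intervalIntegrable (by fun_prop) _ _)
        refine le_trans (intervalIntegral.integral_mono_on hτ0 hint1 hint2 hpt) ?_
        rw [intervalIntegral.integral_const_mul]
        rw [div_eq_mul_inv, mul_assoc, mul_assoc]
        refine mul_le_mul_of_nonneg_left ?_ hCst0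
        refine mul_le_mul_of_nonneg_left ?_ (Real.exp_pos _).le
        simpa [one_div] using integral_exp_le' β τ hβ
    -- multiply by exp(σ τ)
    have h2 : u τ ≤ Real.exp (σ * τ) * (Real.exp (-α * τ) * M₀ + Cst * Real.exp (-σ * τ) / β) :=
      mul_le_mul_of_nonneg_left habs (Real.exp_pos _).le
    have e3 : Real.exp (σ * τ) * Real.exp (-α * τ) ≤ 1 := by
      rw [← Real.exp_add]
      apply Real.exp_le_one_iff.mpr
      nlinarith
    have e4 : Real.exp (σ * τ) * Real.exp (-σ * τ) = 1 := by
      rw [← Real.exp_add]; simp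
    have e5 : Real.exp (σ * τ) * (Real.exp (-α * τ) * M₀ + Cst * Real.exp (-σ * τ) / β)
        = (Real.exp (σ * τ) * Real.exp (-α * τ)) * M₀
          + Cst * (Real.exp (σ * τ) * Real.exp (-σ * τ)) / β := by ring
    rw [e5, e4] at h2
    have : (Real.exp (σ * τ) * Real.exp (-α * τ)) * M₀ ≤ M₀ := by nlinarith
    calc u τ ≤ (Real.exp (σ * τ) * Real.exp (-α * τ)) * M₀ + Cst * 1 / β := h2
      _ ≤ M₀ + Cst / β := by rw [mul_one]; linarith
  -- bound on U
  have hUbound : U ≤ M₀ + (γ * U + Real.exp (σ * T) * R) / β := by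
    rcases le_or_gt s₀ 0 with hc | hc
    · have h1 : u s₀ ≤ M₀ := by
        have he : Real.exp (σ * s₀) ≤ 1 := Real.exp_le_one_iff.mpr (by nlinarith)
        calc Real.exp (σ * s₀) * Complex.abs (y s₀)
            ≤ 1 * M₀ := mul_le_mul he (hM₀ s₀ ⟨hs₀mem.1, hc⟩) (Complex.abs.nonneg _) zero_le_one
          _ = M₀ := one_mul _
      have h2 : 0 ≤ (γ * U + Real.exp (σ * T) * R) / β := by positivity
      calc U = u s₀ := rfl
        _ ≤ M₀ := h1
        _ ≤ _ := by linarith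
    · exact est s₀ ⟨hc.le, hs₀mem.2⟩
  have hUfin : U ≤ (β * M₀ + Real.exp (σ * T) * R) / (β - γ) := by
    have h6 : U * β ≤ M₀ * β + (γ * U + Real.exp (σ * T) * R) := by
      have := mul_le_mul_of_nonneg_right hUbound hβ.le
      rwa [add_mul, div_mul_cancel₀ _ hβ.ne'] at this
    rw [le_div_iff₀ (by linarith : (0:ℝ) < β - γ)]
    nlinarith
  have h8 : u T ≤ U := hUb T ⟨by linarith, le_rfl⟩
  have h9 : Complex.abs (y T) = Real.exp (-σ * T) * u T := by
    simp only [hudef, ← mul_assoc, ← Real.exp_add]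
    rw [show -σ * T + σ * T = 0 by ring, Real.exp_zero, one_mul]
  have h10 : Complex.abs (y T) ≤ Real.exp (-σ * T) * U := by
    rw [h9]; exact mul_le_mul_of_nonneg_left h8 (Real.exp_pos _).le
  have hexp1 : Real.exp (-σ * T) * Real.exp (σ * T) = 1 := by
    rw [← Real.exp_add]; rw [show -σ * T + σ * T = 0 by ring, Real.exp_zero]
  calc Complex.abs (y T) ≤ Real.exp (-σ * T) * ((β * M₀ + Real.exp (σ * T) * R) / (β - γ)) :=
        le_trans h10 (mul_le_mul_of_nonneg_left hUfin (Real.exp_pos _).le)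
    _ = (β * Real.exp (-σ * T) * M₀ + R) / (β - γ) := by
        rw [mul_div_assoc']
        congr 1
        linear_combination R * hexp1

theorem ISS_truncated_delay_model
    (N : ℕ) (hN : 1 ≤ N) (h_m h_M : ℝ) (hm : 0 < h_m) (hmM : h_m < h_M)
    (c : ℝ) (A : Matrix (Fin N) (Fin N) ℝ)
    (μ : Fin N → ℂ) (hμ_inj : Function.Injective μ)
    (hμ_char : (A.map (algebraMap ℝ ℂ)).charpoly = ∏ i : Fin N, (X - C (μ i)))
    (hμ_re : ∀ i, (μ i).re < -3 * |c|) :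
    ∃ σ C₀ C₁ : ℝ, 0 < σ ∧ 0 < C₀ ∧ 0 < C₁ ∧
      ∀ (x₀ : ℝ → (Fin N → ℝ)), ContinuousOn x₀ (Icc (-h_M) 0) →
      ∀ (h : ℝ → ℝ), Continuous h → (∀ t, 0 ≤ t → h t ∈ Icc h_m h_M) →
      ∀ (q : ℝ → (Fin N → ℝ)), Continuous q →
      ∀ (x : ℝ → (Fin N → ℝ)), Continuous x →
        (∀ τ ∈ Icc (-h_M) (0 : ℝ), x τ = x₀ τ) →
        (∀ t : ℝ, 0 ≤ t →
          HasDerivAt x (A.mulVec (x t) + c • (x (t - h t) - x t) + q t) t) →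
        ∀ t : ℝ, 0 ≤ t →
          ‖x t‖ ≤ C₀ * Real.exp (-σ * t) * (⨆ τ : Icc (-h_M) (0 : ℝ), ‖x₀ τ‖)
            + C₁ * ⨆ τ : Icc (0 : ℝ) t, Real.exp (-σ * (t - τ)) * ‖q τ‖ := by
  haveI : Nonempty (Fin N) := Fin.pos_iff_nonempty.mp hN
  have hM0 : 0 < h_M := lt_trans hm hmM
  set Ac : Matrix (Fin N) (Fin N) ℂ := A.map (algebraMap ℝ ℂ) with hAc
  -- eigenvalue / left-eigenvector machinery
  have heval : ∀ t : ℂ, (Ac.charpoly).eval t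
      = (t • (1 : Matrix (Fin N) (Fin N) ℂ) - Ac).det := by
    intro t
    rw [Matrix.charpoly, ← Polynomial.coe_evalRingHom, RingHom.map_det]
    congr 1
    ext i j
    by_cases hij : i = j
    · subst hij
      simp [Matrix.charmatrix_apply, Matrix.one_apply, Matrix.diagonal_apply_eq]
    · simp [Matrix.charmatrix_apply, Matrix.one_apply, hij, Matrix.diagonal_apply_ne _ hij]
  have hroot : ∀ i, ((μ i) • (1 : Matrix (Fin N) (Fin N) ℂ) - Ac).det = 0 := by
    intro i
    rw [← heval, hμ_char, Polynomial.eval_prod]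
    exact Finset.prod_eq_zero (Finset.mem_univ i) (by simp)
  have hexists : ∀ i, ∃ v : Fin N → ℂ, v ≠ 0 ∧ v ᵥ* Ac = μ i • v := by
    intro i
    obtain ⟨v, hv0, hv⟩ := Matrix.exists_vecMul_eq_zero_iff.mpr (hroot i)
    refine ⟨v, hv0, ?_⟩
    rw [Matrix.vecMul_sub, sub_eq_zero] at hv
    rw [← hv]
    ext j
    simp [Matrix.vecMul, dotProduct, Matrix.smul_apply, Matrix.one_apply, mul_comm,
      Finset.mul_sum, mul_ite, ite_mul]
  choose w hw0 hwA using hexists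
  have hli : LinearIndependent ℂ w := by
    apply Module.End.eigenvectors_linearIndependent' (Matrix.mulVecLin Acᵀ) μ hμ_inj
    intro i
    constructor
    · rw [Module.End.mem_eigenspace_iff]
      show Acᵀ *ᵥ w i = μ i • w i
      rw [Matrix.mulVec_transpose]
      exact hwA i
    · exact hw0 i
  set W : Matrix (Fin N) (Fin N) ℂ := Matrix.of w with hW
  have hWunit : IsUnit W := by
    rw [← Matrix.linearIndependent_rows_iff_isUnit]
    exact hli
  have hWdet : IsUnit W.det := (Matrix.isUnit_iff_isUnit_det _).mp hWunit
  have hWinv : W⁻¹ * W = 1 := Matrix.nonsing_inv_mul W hWdet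
  have hWA : W * Ac = Matrix.diagonal μ * W := by
    ext i j
    have h1 : (W * Ac) i j = (w i ᵥ* Ac) j := rfl
    rw [h1, hwA i, Matrix.diagonal_mul]
    simp [hW]
  -- constants
  set α : ℝ := Finset.univ.inf' Finset.univ_nonempty (fun i => c - (μ i).re) with hα
  have hαle : ∀ i, α ≤ c - (μ i).re := fun i => Finset.inf'_le _ (Finset.mem_univ i)
  have hc0 : 0 ≤ |c| := abs_nonneg c
  have hα2c : 2 * |c| < α := by
    rw [hα, Finset.lt_inf'_iff]
    intro i _
    have h1 := hμ_re i
    have h2 : -|c| ≤ c := neg_abs_le c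
    linarith
  have hαpos : 0 < α := by linarith
  set δ : ℝ := α - |c| with hδ
  have hδpos : 0 < δ := by rw [hδ]; linarith
  set σ : ℝ := min (δ/4) (Real.log (1 + δ/(2*(|c|+1))) / h_M) with hσdef
  have hlogpos : 0 < Real.log (1 + δ/(2*(|c|+1))) := by
    apply Real.log_pos
    have : 0 < δ/(2*(|c|+1)) := by positivity
    linarith
  have hσpos : 0 < σ := lt_min (by linarith) (div_pos hlogpos hM0)
  have hσδ : σ ≤ δ/4 := min_le_left _ _
  have hσα : σ < α := by
    have h1 : δ ≤ α := by rw [hδ]; linarith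
    linarith
  have hexpb : Real.exp (σ * h_M) ≤ 1 + δ/(2*(|c|+1)) := by
    have h1 : σ * h_M ≤ Real.log (1 + δ/(2*(|c|+1))) := by
      have h2 := min_le_right (δ/4) (Real.log (1 + δ/(2*(|c|+1))) / h_M)
      calc σ * h_M ≤ (Real.log (1 + δ/(2*(|c|+1))) / h_M) * h_M :=
            mul_le_mul_of_nonneg_right h2 hM0.le
        _ = Real.log (1 + δ/(2*(|c|+1))) := div_mul_cancel₀ _ hM0.ne'
    calc Real.exp (σ * h_M) ≤ Real.exp (Real.log (1 + δ/(2*(|c|+1)))) := Real.exp_le_exp.mpr h1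
      _ = 1 + δ/(2*(|c|+1)) := Real.exp_log (by positivity)
  have hθ : |c| * Real.exp (σ * h_M) < α - σ := by
    have h2 : |c| * Real.exp (σ * h_M) ≤ |c| * (1 + δ/(2*(|c|+1))) :=
      mul_le_mul_of_nonneg_left hexpb hc0
    have h3 : |c| * (1 + δ/(2*(|c|+1))) ≤ |c| + δ/2 := by
      rw [mul_add, mul_one]
      have h4 : |c| * (δ/(2*(|c|+1))) ≤ δ/2 := by
        rw [mul_div_assoc', div_le_div_iff₀ (by positivity) (by norm_num : (0:ℝ) < 2)]
        nlinarith
      linarith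
    have h5 : α - σ ≥ |c| + 3*δ/4 := by
      have : α = |c| + δ := by rw [hδ]; ring
      linarith
    linarith
  have hden : 0 < α - σ - |c| * Real.exp (σ * h_M) := by linarith
  -- norm-transfer constants
  set Kw : ℝ := (∑ i, ∑ j, Complex.abs (W i j)) + 1 with hKw
  set Kw' : ℝ := (∑ i, ∑ j, Complex.abs (W⁻¹ i j)) + 1 with hKw'
  have hKwpos : 0 < Kw := by
    rw [hKw]; exact add_pos_of_nonneg_of_pos (Finset.sum_nonneg fun i _ => Finset.sum_nonneg fun j _ => Complex.abs.nonneg _) one_pos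
  have hKw'pos : 0 < Kw' := by
    rw [hKw']; exact add_pos_of_nonneg_of_pos (Finset.sum_nonneg fun i _ => Finset.sum_nonneg fun j _ => Complex.abs.nonneg _) one_pos
  have hrow : ∀ i, (∑ j, Complex.abs (W i j)) ≤ Kw := by
    intro i
    have h1 : (∑ j, Complex.abs (W i j)) ≤ ∑ i', ∑ j, Complex.abs (W i' j) :=
      Finset.single_le_sum (f := fun i' => ∑ j, Complex.abs (W i' j))
        (fun i' _ => Finset.sum_nonneg fun j _ => Complex.abs.nonneg _) (Finset.mem_univ i)
    rw [hKw]; linarith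
  have hrow' : ∀ i, (∑ j, Complex.abs (W⁻¹ i j)) ≤ Kw' := by
    intro i
    have h1 : (∑ j, Complex.abs (W⁻¹ i j)) ≤ ∑ i', ∑ j, Complex.abs (W⁻¹ i' j) :=
      Finset.single_le_sum (f := fun i' => ∑ j, Complex.abs (W⁻¹ i' j))
        (fun i' _ => Finset.sum_nonneg fun j _ => Complex.abs.nonneg _) (Finset.mem_univ i)
    rw [hKw']; linarith
  have hWbound : ∀ (v : Fin N → ℝ) (i : Fin N),
      Complex.abs ((W *ᵥ (fun j => ((v j : ℝ) : ℂ))) i) ≤ Kw * ‖v‖ := by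
    intro v i
    have h0 : 0 ≤ ‖v‖ := norm_nonneg v
    simp only [Matrix.mulVec, dotProduct]
    calc Complex.abs (∑ j, W i j * ((v j : ℝ) : ℂ))
        ≤ ∑ j, Complex.abs (W i j * ((v j : ℝ) : ℂ)) := Complex.abs.sum_le _ _
      _ = ∑ j, Complex.abs (W i j) * |v j| := by
          simp [map_mul, Complex.abs_ofReal]
      _ ≤ ∑ j, Complex.abs (W i j) * ‖v‖ := by
          refine Finset.sum_le_sum fun j _ => mul_le_mul_of_nonneg_left ?_ (Complex.abs.nonneg _)
          simpa [Real.norm_eq_abs] using norm_le_pi_norm v j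
      _ = (∑ j, Complex.abs (W i j)) * ‖v‖ := by rw [Finset.sum_mul]
      _ ≤ Kw * ‖v‖ := mul_le_mul_of_nonneg_right (hrow i) h0
  -- provide constants
  have hC₀pos : 0 < Kw' * Kw * (α - σ) / (α - σ - |c| * Real.exp (σ * h_M)) :=
    div_pos (mul_pos (mul_pos hKw'pos hKwpos) (by linarith)) hden
  have hC₁pos : 0 < Kw' * Kw / (α - σ - |c| * Real.exp (σ * h_M)) :=
    div_pos (mul_pos hKw'pos hKwpos) hden
  refine ⟨σ, Kw' * Kw * (α - σ) / (α - σ - |c| * Real.exp (σ * h_M)),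
    Kw' * Kw / (α - σ - |c| * Real.exp (σ * h_M)), hσpos, hC₀pos, hC₁pos, ?_⟩
  intro x₀ hx₀ h hh hhmem q hq x hx hinit hode t ht
  haveI hne1 : Nonempty (Icc (-h_M) (0:ℝ)) := ⟨⟨0, by constructor <;> linarith⟩⟩
  haveI hne2 : Nonempty (Icc (0:ℝ) t) := ⟨⟨0, le_rfl, ht⟩⟩
  set Xsup := ⨆ τ : Icc (-h_M) (0:ℝ), ‖x₀ ↑τ‖ with hXsup
  have hXbdd : BddAbove (Set.range fun τ : Icc (-h_M) (0:ℝ) => ‖x₀ ↑τ‖) := by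
    obtain ⟨Cb, hCb⟩ := (isCompact_Icc.image_of_continuousOn hx₀.norm).bddAbove
    refine ⟨Cb, ?_⟩
    rintro v ⟨τ, rfl⟩
    exact hCb ⟨↑τ, τ.2, rfl⟩
  have hXle : ∀ s ∈ Icc (-h_M) (0:ℝ), ‖x₀ s‖ ≤ Xsup := fun s hs => le_ciSup hXbdd ⟨s, hs⟩
  have hX0 : 0 ≤ Xsup := le_trans (norm_nonneg _) (hXle 0 ⟨by linarith, le_rfl⟩)
  set Qsup := ⨆ τ : Icc (0:ℝ) t, Real.exp (-σ * (t - ↑τ)) * ‖q ↑τ‖ with hQsup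
  have hQbdd : BddAbove (Set.range fun τ : Icc (0:ℝ) t => Real.exp (-σ * (t - ↑τ)) * ‖q ↑τ‖) := by
    have hqc : ContinuousOn (fun s : ℝ => Real.exp (-σ * (t - s)) * ‖q s‖) (Icc 0 t) := by
      apply Continuous.continuousOn
      fun_prop
    obtain ⟨Cb, hCb⟩ := (isCompact_Icc.image_of_continuousOn hqc).bddAbove
    refine ⟨Cb, ?_⟩
    rintro v ⟨τ, rfl⟩
    exact hCb ⟨↑τ, τ.2, rfl⟩
  have hQle : ∀ s ∈ Icc (0:ℝ) t, Real.exp (-σ * (t - s)) * ‖q s‖ ≤ Qsup :=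
    fun s hs => le_ciSup hQbdd ⟨s, hs⟩
  have hQ0 : 0 ≤ Qsup := le_trans (by positivity) (hQle 0 ⟨le_rfl, ht⟩)
  -- transformed coordinates
  set B : ℝ := ((α - σ) * Real.exp (-σ * t) * (Kw * Xsup) + Kw * Qsup)
    / (α - σ - |c| * Real.exp (σ * h_M)) with hB
  have hB0 : 0 ≤ B := by
    rw [hB]
    apply div_nonneg _ hden.le
    have h1 : 0 ≤ (α - σ) * Real.exp (-σ * t) * (Kw * Xsup) := by
      apply mul_nonneg (mul_nonneg (by linarith) (Real.exp_pos _).le)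
      positivity
    have h2 : 0 ≤ Kw * Qsup := by positivity
    linarith
  set xC : ℝ → Fin N → ℂ := fun s j => ((x s j : ℝ) : ℂ) with hxC
  set y : ℝ → Fin N → ℂ := fun s => W *ᵥ (xC s) with hy
  set rr : ℝ → Fin N → ℂ := fun s => W *ᵥ (fun j => ((q s j : ℝ) : ℂ)) with hrr
  have hcomp : ∀ k, Complex.abs (y t k) ≤ B := by
    intro k
    rw [hB]
    have hν : (μ k - (c:ℂ)).re ≤ -α := by
      have := hαle k
      simp only [Complex.sub_re, Complex.ofReal_re]
      linarith
    have hhr : ∀ s, 0 ≤ s → 0 ≤ h s ∧ h s ≤ h_M := by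
      intro s hs
      have := hhmem s hs
      exact ⟨by linarith [this.1], this.2⟩
    have hyk : Continuous (fun s => y s k) := by
      simp only [hy, hxC, Matrix.mulVec, dotProduct]
      apply continuous_finset_sum
      intro j _
      exact continuous_const.mul (Complex.continuous_ofReal.comp ((continuous_apply j).comp hx))
    have hrk : Continuous (fun s => rr s k) := by
      simp only [hrr, Matrix.mulVec, dotProduct]
      apply continuous_finset_sum
      intro j _
      exact continuous_const.mul (Complex.continuous_ofReal.comp ((continuous_apply j).comp hq))
    have hodek : ∀ s, 0 ≤ s → HasDerivAt (fun s => y s k)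
        ((μ k - (c:ℂ)) * y s k + (c:ℂ) * y (s - h s) k + rr s k) s := by
      intro s hs
      have hD := hode s hs
      have h1 : HasDerivAt (fun s' => y s' k)
          (∑ j, W k j * (((A.mulVec (x s) + c • (x (s - h s) - x s) + q s) j : ℝ) : ℂ)) s := by
        simp only [hy, hxC, Matrix.mulVec, dotProduct]
        exact HasDerivAt.fun_sum fun j _ =>
          (HasDerivAt.ofReal_comp (hasDerivAt_pi.mp hD j)).const_mul (W k j)
      convert h1 using 1
      have expand : ∀ j, (((A.mulVec (x s) + c • (x (s - h s) - x s) + q s) j : ℝ) : ℂ)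
          = (((A.mulVec (x s)) j : ℝ) : ℂ)
            + (c:ℂ) * (((x (s - h s) j : ℝ) : ℂ) - ((x s j : ℝ) : ℂ))
            + ((q s j : ℝ) : ℂ) := by
        intro j
        simp only [Pi.add_apply, Pi.smul_apply, Pi.sub_apply, smul_eq_mul]
        push_cast
        ring
      have hsplit : (∑ j, W k j * (((A.mulVec (x s) + c • (x (s - h s) - x s) + q s) j : ℝ) : ℂ))
          = (∑ j, W k j * (((A.mulVec (x s)) j : ℝ) : ℂ))
            + (c:ℂ) * ((∑ j, W k j * ((x (s - h s) j : ℝ) : ℂ))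
              - (∑ j, W k j * ((x s j : ℝ) : ℂ)))
            + (∑ j, W k j * ((q s j : ℝ) : ℂ)) := by
        rw [show (∑ j, W k j * (((A.mulVec (x s) + c • (x (s - h s) - x s) + q s) j : ℝ) : ℂ))
            = ∑ j, (W k j * (((A.mulVec (x s)) j : ℝ) : ℂ)
              + ((c:ℂ) * (W k j * ((x (s - h s) j : ℝ) : ℂ))
                - (c:ℂ) * (W k j * ((x s j : ℝ) : ℂ)))
              + W k j * ((q s j : ℝ) : ℂ)) from
          Finset.sum_congr rfl fun j _ => by rw [expand j]; ring]
        rw [Finset.sum_add_distrib, Finset.sum_add_distrib, Finset.sum_sub_distrib,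
          ← Finset.mul_sum, ← Finset.mul_sum, ← mul_sub]
      rw [hsplit]
      have hA : (∑ j, W k j * (((A.mulVec (x s)) j : ℝ) : ℂ)) = μ k * y s k := by
        have h2 : ∀ j, (((A.mulVec (x s)) j : ℝ) : ℂ) = (Ac *ᵥ (xC s)) j := by
          intro j
          have h3 := RingHom.map_mulVec (algebraMap ℝ ℂ) A (x s) j
          rw [hAc, hxC]
          convert h3 using 2 <;> rfl
        calc (∑ j, W k j * (((A.mulVec (x s)) j : ℝ) : ℂ))
            = ∑ j, W k j * (Ac *ᵥ (xC s)) j := by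
              exact Finset.sum_congr rfl fun j _ => by rw [h2 j]
          _ = (W *ᵥ (Ac *ᵥ (xC s))) k := rfl
          _ = ((W * Ac) *ᵥ (xC s)) k := by rw [Matrix.mulVec_mulVec]
          _ = ((Matrix.diagonal μ * W) *ᵥ (xC s)) k := by rw [hWA]
          _ = (Matrix.diagonal μ *ᵥ (W *ᵥ (xC s))) k := by rw [Matrix.mulVec_mulVec]
          _ = μ k * y s k := by rw [Matrix.mulVec_diagonal, hy]
      have hq' : (∑ j, W k j * ((q s j : ℝ) : ℂ)) = rr s k := rfl
      have hx1 : (∑ j, W k j * ((x (s - h s) j : ℝ) : ℂ)) = y (s - h s) k := rfl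
      have hx2 : (∑ j, W k j * ((x s j : ℝ) : ℂ)) = y s k := rfl
      rw [hA, hq', hx1, hx2]
      ring
    have hM₀' : ∀ s ∈ Icc (-h_M) (0:ℝ), Complex.abs (y s k) ≤ Kw * Xsup := by
      intro s hs
      have h1 := hWbound (x s) k
      calc Complex.abs (y s k) ≤ Kw * ‖x s‖ := h1
        _ = Kw * ‖x₀ s‖ := by rw [hinit s hs]
        _ ≤ Kw * Xsup := mul_le_mul_of_nonneg_left (hXle s hs) hKwpos.le
    have hR' : ∀ s ∈ Icc (0:ℝ) t,
        Real.exp (-σ * (t - s)) * Complex.abs (rr s k) ≤ Kw * Qsup := by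
      intro s hs
      have h1 := hWbound (q s) k
      calc Real.exp (-σ * (t - s)) * Complex.abs (rr s k)
          ≤ Real.exp (-σ * (t - s)) * (Kw * ‖q s‖) :=
            mul_le_mul_of_nonneg_left h1 (Real.exp_pos _).le
        _ = Kw * (Real.exp (-σ * (t - s)) * ‖q s‖) := by ring
        _ ≤ Kw * Qsup := mul_le_mul_of_nonneg_left (hQle s hs) hKwpos.le
    exact scalar_halanay h_M α σ c hM0 hαpos hσpos hσα hθ (μ k - (c:ℂ)) hν h hh hhr
      (fun s => rr s k) hrk (fun s => y s k) hyk hodek (Kw * Xsup) (Kw * Qsup) t ht hM₀' hR'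
  -- recover x from y
  have hxt : ∀ j, |x t j| ≤ Kw' * B := by
    intro j
    have h2 : xC t = W⁻¹ *ᵥ (y t) := by
      rw [hy, Matrix.mulVec_mulVec, hWinv, Matrix.one_mulVec]
    have h3 : |x t j| ≤ Complex.abs ((W⁻¹ *ᵥ (y t)) j) := by
      have h4 : x t j = ((W⁻¹ *ᵥ (y t)) j).re := by
        rw [← h2]; simp [hxC]
      rw [h4]
      exact Complex.abs_re_le_abs _
    refine le_trans h3 ?_
    have h5 : Complex.abs ((W⁻¹ *ᵥ (y t)) j) ≤ ∑ k, Complex.abs (W⁻¹ j k) * Complex.abs (y t k) := by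
      simp only [Matrix.mulVec, dotProduct]
      refine le_trans (Complex.abs.sum_le _ _) ?_
      exact le_of_eq (Finset.sum_congr rfl fun k _ => map_mul _ _ _)
    refine le_trans h5 ?_
    calc ∑ k, Complex.abs (W⁻¹ j k) * Complex.abs (y t k)
        ≤ ∑ k, Complex.abs (W⁻¹ j k) * B :=
          Finset.sum_le_sum fun k _ => mul_le_mul_of_nonneg_left (hcomp k) (Complex.abs.nonneg _)
      _ = (∑ k, Complex.abs (W⁻¹ j k)) * B := by rw [Finset.sum_mul]
      _ ≤ Kw' * B := mul_le_mul_of_nonneg_right (hrow' j) hB0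
  have hnorm : ‖x t‖ ≤ Kw' * B := by
    apply pi_norm_le_iff_of_nonneg (mul_nonneg hKw'pos.le hB0) |>.mpr
    intro j
    simpa [Real.norm_eq_abs] using hxt j
  refine le_trans hnorm (le_of_eq ?_)
  rw [hB]
  field_simp
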